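/- Let γ : H → k be an algebra map, with convolution inverse γ⁻¹ = γ∘S. Then the elements w := γ⁻¹(U¹)U² and w' := γ⁻¹(R¹)R² of H satisfy w·w' = 1 and γ⁻¹(h₁)·h₂·γ(h₃) = w·h·w' for all h ∈ H; in particular, the co-inner automorphism of H induced by γ⁻¹ is an inner automorphism. -/

import Mathlib

open TensorProduct Coalgebra HopfAlgebra

variable {k H : Type*} [Field k] [Ring H] [HopfAlgebra k H]

/-- The antipode of `H`, as a linear map. -/
local notation "𝐒" => HopfAlgebra.antipode (R := k)

/-- Convolution product on the dual of `H`: `(conv f g) h = f h₁ * g h₂`. -/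
noncomputable def conv (f g : H →ₗ[k] k) : H →ₗ[k] k :=
  (LinearMap.mul' k k) ∘ₗ (TensorProduct.map f g) ∘ₗ (Coalgebra.comul (R := k))

/-- `h ↦ f h₁ • h₂`. -/
noncomputable def lT (f : H →ₗ[k] k) : H →ₗ[k] H :=
  (TensorProduct.lid k H).toLinearMap ∘ₗ (f.rTensor H) ∘ₗ (Coalgebra.comul (R := k))

/-- The Sweedler sum `h ↦ f h₁ • p h₃ • g h₂`. -/
noncomputable def sw3 (f : H →ₗ[k] k) (g : H →ₗ[k] H) (p : H →ₗ[k] k) : H →ₗ[k] H :=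
  (TensorProduct.lid k H).toLinearMap
    ∘ₗ (TensorProduct.rid k (k ⊗[k] H)).toLinearMap
    ∘ₗ (TensorProduct.map (TensorProduct.map f g) p)
    ∘ₗ ((Coalgebra.comul (R := k)).rTensor H)
    ∘ₗ (Coalgebra.comul (R := k))

/-- `χ(h) = α(h₂) • S⁻²(h₁)`, the generalized Nakayama automorphism. -/
noncomputable def chiMap (Sinv : H →ₗ[k] H) (f : H →ₗ[k] k) : H →ₗ[k] H :=
  (TensorProduct.rid k H).toLinearMap
    ∘ₗ (TensorProduct.map (Sinv ∘ₗ Sinv) f)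
    ∘ₗ (Coalgebra.comul (R := k))

/-- `f(R¹) • R²` for `R = R¹ ⊗ R² ∈ H ⊗ H`. -/
noncomputable def lap (f : H →ₗ[k] k) : (H ⊗[k] H) →ₗ[k] H :=
  (TensorProduct.lid k H).toLinearMap ∘ₗ (f.rTensor H)

/-- `f(R²) • R¹` for `R = R¹ ⊗ R² ∈ H ⊗ H`. -/
noncomputable def rap (f : H →ₗ[k] k) : (H ⊗[k] H) →ₗ[k] H :=
  (TensorProduct.rid k H).toLinearMap ∘ₗ (LinearMap.lTensor H f)

/-- The Drinfeld element `u = S(R²)R¹`. -/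
noncomputable def uElt (Rm : H ⊗[k] H) : H :=
  (LinearMap.mul' k H)
    ((TensorProduct.comm k H H)
      ((LinearMap.lTensor H (HopfAlgebra.antipode (R := k))) Rm))

/-- Convolution product on the dual of `H ⊗ H`. -/
noncomputable def conv2 (f g : (H ⊗[k] H) →ₗ[k] k) : (H ⊗[k] H) →ₗ[k] k :=
  (LinearMap.mul' k k) ∘ₗ (TensorProduct.map f g) ∘ₗ (Coalgebra.comul (R := k) (A := H ⊗[k] H))

/-- `(h ⊗ l) ↦ σ(h₂ ⊗ l₂) • (l₁ * h₁)`. -/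
noncomputable def ac1 (σ : (H ⊗[k] H) →ₗ[k] k) : (H ⊗[k] H) →ₗ[k] H :=
  (TensorProduct.rid k H).toLinearMap
    ∘ₗ (TensorProduct.map ((LinearMap.mul' k H) ∘ₗ (TensorProduct.comm k H H).toLinearMap) σ)
    ∘ₗ (TensorProduct.tensorTensorTensorComm k H H H H).toLinearMap
    ∘ₗ (TensorProduct.map (Coalgebra.comul (R := k)) (Coalgebra.comul (R := k)))

/-- `(h ⊗ l) ↦ σ(h₁ ⊗ l₁) • (h₂ * l₂)`. -/
noncomputable def ac2 (σ : (H ⊗[k] H) →ₗ[k] k) : (H ⊗[k] H) →ₗ[k] H :=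
  (TensorProduct.lid k H).toLinearMap
    ∘ₗ (TensorProduct.map σ (LinearMap.mul' k H))
    ∘ₗ (TensorProduct.tensorTensorTensorComm k H H H H).toLinearMap
    ∘ₗ (TensorProduct.map (Coalgebra.comul (R := k)) (Coalgebra.comul (R := k)))

/-- `(h ⊗ l) ↦ ρ(h₁ ⊗ l₁) * lam(h₂ * l₂) * τ(h₃ ⊗ l₃)`. -/
noncomputable def trip (lam : H →ₗ[k] k) (ρ τ : (H ⊗[k] H) →ₗ[k] k) : (H ⊗[k] H) →ₗ[k] k :=
  (LinearMap.mul' k k)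
    ∘ₗ ((LinearMap.mul' k k).rTensor k)
    ∘ₗ (TensorProduct.map (TensorProduct.map ρ (lam ∘ₗ (LinearMap.mul' k H))) τ)
    ∘ₗ ((TensorProduct.tensorTensorTensorComm k H H H H).toLinearMap.rTensor (H ⊗[k] H))
    ∘ₗ (TensorProduct.tensorTensorTensorComm k (H ⊗[k] H) H (H ⊗[k] H) H).toLinearMap
    ∘ₗ (TensorProduct.map
          (((Coalgebra.comul (R := k)).rTensor H) ∘ₗ (Coalgebra.comul (R := k)))
          (((Coalgebra.comul (R := k)).rTensor H) ∘ₗ (Coalgebra.comul (R := k))))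

/-- `u(h) = σ(h₂ ⊗ S h₁)`. -/
noncomputable def uF (σ : (H ⊗[k] H) →ₗ[k] k) : H →ₗ[k] k :=
  σ ∘ₗ (TensorProduct.comm k H H).toLinearMap
    ∘ₗ ((HopfAlgebra.antipode (R := k)).rTensor H) ∘ₗ (Coalgebra.comul (R := k))

/-- `v(h) = σ(h₁ ⊗ S h₂)`. -/
noncomputable def vF (σ : (H ⊗[k] H) →ₗ[k] k) : H →ₗ[k] k :=
  σ ∘ₗ (LinearMap.lTensor H (HopfAlgebra.antipode (R := k))) ∘ₗ (Coalgebra.comul (R := k))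

/-- `u⁻¹(h) = σ(S²(h₂) ⊗ h₁)`. -/
noncomputable def uinvF (σ : (H ⊗[k] H) →ₗ[k] k) : H →ₗ[k] k :=
  σ ∘ₗ (((HopfAlgebra.antipode (R := k)) ∘ₗ (HopfAlgebra.antipode (R := k))).rTensor H)
    ∘ₗ (TensorProduct.comm k H H).toLinearMap ∘ₗ (Coalgebra.comul (R := k))

/-- `v⁻¹(h) = σ(S²(h₁) ⊗ h₂)`. -/
noncomputable def vinvF (σ : (H ⊗[k] H) →ₗ[k] k) : H →ₗ[k] k :=
  σ ∘ₗ (((HopfAlgebra.antipode (R := k)) ∘ₗ (HopfAlgebra.antipode (R := k))).rTensor H)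
    ∘ₗ (Coalgebra.comul (R := k))

section Aux

variable (γ : H →ₐ[k] k)

lemma sum_counit_smul_right {c : H} {ι : Type*} (r : Coalgebra.Repr k c ι) :
    ∑ i ∈ r.index, counit (R := k) (r.left i) • r.right i = c := by
  have := Coalgebra.sum_counit_tmul_eq r
  apply_fun (TensorProduct.lid k H) at this
  simp only [map_sum, lid_tmul, one_smul] at this
  exact this

lemma sum_counit_smul_left {c : H} {ι : Type*} (r : Coalgebra.Repr k c ι) :
    ∑ i ∈ r.index, counit (R := k) (r.right i) • r.left i = c := by
  have := Coalgebra.sum_tmul_counit_eq r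
  apply_fun (TensorProduct.rid k H) at this
  simp only [map_sum, rid_tmul, one_smul] at this
  exact this

variable (γ : H →ₐ[k] k)

lemma fγ_sum {c : H} {ι : Type*} (r : Coalgebra.Repr k c ι) :
    ∑ i ∈ r.index, γ (𝐒 (r.left i)) * γ (r.right i) = counit (R := k) c := by
  have := HopfAlgebra.sum_antipode_mul_eq_algebraMap_counit (R := k) r
  apply_fun γ at this
  simp only [map_sum, map_mul, AlgHom.commutes, Algebra.algebraMap_self, RingHom.id_apply] at this
  simpa using this

lemma γf_sum {c : H} {ι : Type*} (r : Coalgebra.Repr k c ι) :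
    ∑ i ∈ r.index, γ (r.left i) * γ (𝐒 (r.right i)) = counit (R := k) c := by
  have := HopfAlgebra.sum_mul_antipode_eq_algebraMap_counit (R := k) r
  apply_fun γ at this
  simp only [map_sum, map_mul, AlgHom.commutes, Algebra.algebraMap_self, RingHom.id_apply] at this
  simpa using this

lemma sum4_swap {M : Type*} [AddCommMonoid M] {α β : Type*} {αJ : α → Type*} {βQ : β → Type*}
    (A : Finset α) (B : Finset β) (J : ∀ i, Finset (αJ i)) (Q : ∀ p, Finset (βQ p))
    (t : ∀ i, αJ i → ∀ p, βQ p → M) :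
    ∑ p ∈ B, ∑ q ∈ Q p, ∑ i ∈ A, ∑ j ∈ J i, t i j p q
      = ∑ i ∈ A, ∑ j ∈ J i, ∑ p ∈ B, ∑ q ∈ Q p, t i j p q := by
  calc ∑ p ∈ B, ∑ q ∈ Q p, ∑ i ∈ A, ∑ j ∈ J i, t i j p q
      = ∑ p ∈ B, ∑ i ∈ A, ∑ j ∈ J i, ∑ q ∈ Q p, t i j p q := by
        refine Finset.sum_congr rfl fun p _ => ?_
        rw [Finset.sum_comm]
        exact Finset.sum_congr rfl fun i _ => Finset.sum_comm
    _ = ∑ i ∈ A, ∑ j ∈ J i, ∑ p ∈ B, ∑ q ∈ Q p, t i j p q := by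
        rw [Finset.sum_comm]
        exact Finset.sum_congr rfl fun i _ => Finset.sum_comm

lemma f_mul (a b : H) : γ (𝐒 (a * b)) = γ (𝐒 a) * γ (𝐒 b) := by
  classical
  set ra := ℛ k a with hra
  set rb := ℛ k b with hrb
  set rla : (i : ra.ι) → Coalgebra.Repr k (ra.left i) (H × H) := fun i => ℛ k (ra.left i) with hrla
  set rra : (i : ra.ι) → Coalgebra.Repr k (ra.right i) (H × H) := fun i => ℛ k (ra.right i) with hrra
  set rlb : (p : rb.ι) → Coalgebra.Repr k (rb.left p) (H × H) := fun p => ℛ k (rb.left p) with hrlb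
  set rrb : (p : rb.ι) → Coalgebra.Repr k (rb.right p) (H × H) := fun p => ℛ k (rb.right p) with hrrb
  -- Step 1 : expand f(ab)
  have hab : a * b = ∑ i ∈ ra.index, ∑ p ∈ rb.index,
      (counit (R := k) (ra.right i) * counit (R := k) (rb.right p)) •
        (ra.left i * rb.left p) := by
    conv_lhs => rw [← sum_counit_smul_left ra, ← sum_counit_smul_left rb]
    rw [Finset.sum_mul_sum]
    exact Finset.sum_congr rfl fun i _ => Finset.sum_congr rfl fun p _ => by
      rw [smul_mul_smul_comm]
  have E1 : γ (𝐒 (a * b)) = ∑ i ∈ ra.index, ∑ j ∈ (rra i).index,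
      ∑ p ∈ rb.index, ∑ q ∈ (rrb p).index,
      γ (𝐒 (ra.left i * rb.left p)) *
        (γ ((rra i).left j * (rrb p).left q) *
          (γ (𝐒 ((rra i).right j)) * γ (𝐒 ((rrb p).right q)))) := by
    rw [hab]
    simp only [map_sum, map_smul, smul_eq_mul]
    refine Finset.sum_congr rfl fun i _ => ?_
    rw [← Finset.sum_comm]
    refine Finset.sum_congr rfl fun p _ => ?_
    rw [← γf_sum γ (rra i), ← γf_sum γ (rrb p), Finset.sum_mul_sum, Finset.sum_mul]
    refine Finset.sum_congr rfl fun j _ => ?_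
    rw [Finset.sum_mul]
    refine Finset.sum_congr rfl fun q _ => ?_
    rw [map_mul γ]
    ring
  -- conv lemma at the level of an arbitrary comul expansion
  have key : ∀ i ∈ ra.index, ∀ p ∈ rb.index,
      ∑ j ∈ (rla i).index, ∑ q ∈ (rlb p).index,
        γ (𝐒 ((rla i).left j * (rlb p).left q)) * γ ((rla i).right j * (rlb p).right q) =
      counit (R := k) (ra.left i * rb.left p) := by
    intro i _ p _
    have hcm : ∑ j ∈ (rla i).index, ∑ q ∈ (rlb p).index,
        ((rla i).left j * (rlb p).left q) ⊗ₜ[k] ((rla i).right j * (rlb p).right q) =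
        comul (R := k) (ra.left i * rb.left p) := by
      rw [Bialgebra.comul_mul, ← (rla i).eq, ← (rlb p).eq, Finset.sum_mul_sum]
      exact Finset.sum_congr rfl fun j _ => Finset.sum_congr rfl fun q _ => by
        rw [Algebra.TensorProduct.tmul_mul_tmul]
    have h2 := congrArg (fun x => (LinearMap.mul' k k)
      ((TensorProduct.map (γ.toLinearMap ∘ₗ 𝐒) γ.toLinearMap) x)) hcm
    simp only [map_sum, TensorProduct.map_tmul, LinearMap.mul'_apply, LinearMap.coe_comp,
      Function.comp_apply, AlgHom.toLinearMap_apply] at h2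
    rw [h2, ← (ℛ k (ra.left i * rb.left p)).eq]
    simp only [map_sum, TensorProduct.map_tmul, LinearMap.mul'_apply, LinearMap.coe_comp,
      Function.comp_apply, AlgHom.toLinearMap_apply]
    exact fγ_sum γ (ℛ k (ra.left i * rb.left p))
  have ha : γ (𝐒 a) = ∑ i ∈ ra.index, counit (R := k) (ra.left i) * γ (𝐒 (ra.right i)) := by
    conv_lhs => rw [← sum_counit_smul_right ra]
    simp only [map_sum, map_smul, smul_eq_mul]
  have hbb : γ (𝐒 b) = ∑ p ∈ rb.index, counit (R := k) (rb.left p) * γ (𝐒 (rb.right p)) := by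
    conv_lhs => rw [← sum_counit_smul_right rb]
    simp only [map_sum, map_smul, smul_eq_mul]
  -- Step 2 : expand f(a) f(b)
  have E2 : γ (𝐒 a) * γ (𝐒 b) = ∑ i ∈ ra.index, ∑ j ∈ (rla i).index,
      ∑ p ∈ rb.index, ∑ q ∈ (rlb p).index,
      γ (𝐒 ((rla i).left j * (rlb p).left q)) *
        (γ ((rla i).right j * (rlb p).right q) *
          (γ (𝐒 (ra.right i)) * γ (𝐒 (rb.right p)))) := by
    rw [ha, hbb, Finset.sum_mul_sum]
    refine Finset.sum_congr rfl fun i hi => ?_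
    rw [← Finset.sum_comm]
    refine Finset.sum_congr rfl fun p hp => ?_
    rw [eq_comm]
    calc ∑ j ∈ (rla i).index, ∑ q ∈ (rlb p).index,
        γ (𝐒 ((rla i).left j * (rlb p).left q)) *
          (γ ((rla i).right j * (rlb p).right q) *
            (γ (𝐒 (ra.right i)) * γ (𝐒 (rb.right p))))
        = (∑ j ∈ (rla i).index, ∑ q ∈ (rlb p).index,
            γ (𝐒 ((rla i).left j * (rlb p).left q)) * γ ((rla i).right j * (rlb p).right q)) *
          (γ (𝐒 (ra.right i)) * γ (𝐒 (rb.right p))) := by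
          rw [Finset.sum_mul]
          exact Finset.sum_congr rfl fun j _ => by
            rw [Finset.sum_mul]
            exact Finset.sum_congr rfl fun q _ => by ring
      _ = counit (R := k) (ra.left i * rb.left p) * (γ (𝐒 (ra.right i)) * γ (𝐒 (rb.right p))) := by
          rw [key i hi p hp]
      _ = counit (R := k) (ra.left i) * γ (𝐒 (ra.right i)) *
            (counit (R := k) (rb.left p) * γ (𝐒 (rb.right p))) := by
          rw [Bialgebra.counit_mul]; ring
  -- Step 3 : coassociativity swap via a 6-fold functional
  set γL := γ.toLinearMap with hγL
  set Φ : (H ⊗[k] (H ⊗[k] H)) ⊗[k] (H ⊗[k] (H ⊗[k] H)) →ₗ[k] k :=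
    (LinearMap.mul' k k) ∘ₗ
      (TensorProduct.map (γL ∘ₗ 𝐒 ∘ₗ LinearMap.mul' k H)
        ((LinearMap.mul' k k) ∘ₗ TensorProduct.map (γL ∘ₗ LinearMap.mul' k H)
          ((LinearMap.mul' k k) ∘ₗ TensorProduct.map (γL ∘ₗ 𝐒) (γL ∘ₗ 𝐒)))) ∘ₗ
      (LinearMap.lTensor (H ⊗[k] H) (tensorTensorTensorComm k H H H H).toLinearMap) ∘ₗ
      (tensorTensorTensorComm k H (H ⊗[k] H) H (H ⊗[k] H)).toLinearMap with hΦ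
  have hca := Coalgebra.sum_tmul_tmul_eq ra rla rra
  have hcb := Coalgebra.sum_tmul_tmul_eq rb rlb rrb
  have E3 := congrArg₂ (fun x y => Φ (x ⊗ₜ[k] y)) hca hcb
  simp only [sum_tmul, tmul_sum, map_sum, hΦ, LinearMap.coe_comp, Function.comp_apply,
    LinearEquiv.coe_coe, tensorTensorTensorComm_tmul, LinearMap.lTensor_tmul,
    TensorProduct.map_tmul, LinearMap.mul'_apply, AlgHom.toLinearMap_apply, hγL] at E3
  rw [E1, E2]
  exact ((sum4_swap _ _ _ _ _).symm.trans (E3.trans (sum4_swap _ _ _ _ _))).symm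

lemma antipode_one' : (𝐒 : H →ₗ[k] H) 1 = 1 := by
  have := mul_antipode_rTensor_comul_apply (R := k) (1 : H)
  simpa [Algebra.TensorProduct.one_def] using this

lemma lap_tmul (f : H →ₗ[k] k) (x y : H) : lap f (x ⊗ₜ[k] y) = f x • y := by
  simp [lap]

lemma lap_mul_lap (f : H →ₗ[k] k) (hf : ∀ a b : H, f (a * b) = f a * f b)
    (x y : H ⊗[k] H) : lap f (x * y) = lap f x * lap f y := by
  induction x using TensorProduct.induction_on with
  | zero => simp
  | add u v hu hv => simp [add_mul, hu, hv]
  | tmul a b =>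
    induction y using TensorProduct.induction_on with
    | zero => simp
    | add u v hu hv => simp [mul_add, hu, hv]
    | tmul c d =>
      rw [Algebra.TensorProduct.tmul_mul_tmul, lap_tmul, lap_tmul, lap_tmul, hf,
        smul_mul_smul_comm]

lemma lap_one (f : H →ₗ[k] k) (hf1 : f 1 = 1) : lap f (1 : H ⊗[k] H) = 1 := by
  rw [Algebra.TensorProduct.one_def, lap_tmul, hf1, one_smul]


end Aux

set_option maxHeartbeats 1000000
set_option synthInstance.maxHeartbeats 400000

/-- In an almost cocommutative Hopf algebra $(H,R)$, for an algebra map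
$γ : H → k$, the elements $w = γ^{-1}(U^1)U^2$ and $w' = γ^{-1}(R^1)R^2$ (with $U = R^{-1}$,
$γ^{-1} = γ∘S$) satisfy $w w' = 1$ and $γ^{-1}(h_1) h_2 γ(h_3) = w h w'$ for all $h$;
i.e. the co-inner automorphism induced by $γ^{-1}$ is inner. -/
theorem coinner_of_grouplike_is_inner
    (R U : H ⊗[k] H) (hRU : R * U = 1) (hUR : U * R = 1)
    (hqt4 : ∀ h : H, (TensorProduct.comm k H H) (Coalgebra.comul (R := k) h) =
      R * (Coalgebra.comul (R := k) h) * U)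
    (γ : H →ₐ[k] k) :
    (lap (γ.toLinearMap ∘ₗ (𝐒 : H →ₗ[k] H)) U) * (lap (γ.toLinearMap ∘ₗ (𝐒 : H →ₗ[k] H)) R) = 1 ∧
      ∀ h : H, sw3 (γ.toLinearMap ∘ₗ (𝐒 : H →ₗ[k] H)) LinearMap.id γ.toLinearMap h =
        (lap (γ.toLinearMap ∘ₗ (𝐒 : H →ₗ[k] H)) U) * h *
          (lap (γ.toLinearMap ∘ₗ (𝐒 : H →ₗ[k] H)) R) := by
  classical
  set f : H →ₗ[k] k := γ.toLinearMap ∘ₗ (𝐒 : H →ₗ[k] H) with hfdef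
  have hfapp : ∀ a : H, f a = γ (𝐒 a) := fun a => rfl
  have hf : ∀ a b : H, f (a * b) = f a * f b := by
    intro a b; simp only [hfapp]; exact f_mul γ a b
  have hf1 : f 1 = 1 := by rw [hfapp, antipode_one', map_one]
  have hww : lap f U * lap f R = 1 := by
    rw [← lap_mul_lap f hf, hUR, lap_one f hf1]
  refine ⟨hww, fun h => ?_⟩
  -- the key conjugation identity
  have key : ∀ a : H, lap f (Coalgebra.comul (R := k) a) =
      lap f U * lap f ((TensorProduct.comm k H H) (Coalgebra.comul (R := k) a)) * lap f R := by
    intro a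
    have h1 : lap f ((TensorProduct.comm k H H) (Coalgebra.comul (R := k) a)) =
        lap f R * lap f (Coalgebra.comul (R := k) a) * lap f U := by
      rw [hqt4 a, lap_mul_lap f hf, lap_mul_lap f hf]
    rw [h1]
    have hre : lap f U * (lap f R * lap f (Coalgebra.comul (R := k) a) * lap f U) * lap f R
        = (lap f U * lap f R) * lap f (Coalgebra.comul (R := k) a) * (lap f U * lap f R) := by
      noncomm_ring
    rw [hre, hww, one_mul, mul_one]
  set r := ℛ k h with hr
  set rl : (i : r.ι) → Coalgebra.Repr k (r.left i) (H × H) := fun i => ℛ k (r.left i) with hrl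
  set rr : (i : r.ι) → Coalgebra.Repr k (r.right i) (H × H) := fun i => ℛ k (r.right i) with hrr
  -- expand sw3
  have hsw : sw3 f LinearMap.id γ.toLinearMap h =
      ∑ i ∈ r.index, γ (r.right i) • lap f (Coalgebra.comul (R := k) (r.left i)) := by
    simp only [sw3, LinearMap.coe_comp, Function.comp_apply, LinearEquiv.coe_coe]
    rw [← r.eq]
    simp only [map_sum, LinearMap.rTensor_tmul, TensorProduct.map_tmul, rid_tmul,
      AlgHom.toLinearMap_apply, map_smul]
    refine Finset.sum_congr rfl fun i _ => ?_
    congr 1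
  -- the middle sum collapses to h
  have hmid : ∑ i ∈ r.index,
      γ (r.right i) • lap f ((TensorProduct.comm k H H) (Coalgebra.comul (R := k) (r.left i)))
      = h := by
    have hexp : ∀ i : r.ι,
        lap f ((TensorProduct.comm k H H) (Coalgebra.comul (R := k) (r.left i))) =
        ∑ j ∈ (rl i).index, f ((rl i).right j) • (rl i).left j := by
      intro i
      rw [← (rl i).eq]
      simp only [map_sum, TensorProduct.comm_tmul]
      exact Finset.sum_congr rfl fun j _ => lap_tmul f _ _
    have hco := Coalgebra.sum_tmul_tmul_eq r rl rr
    have hT := congrArg ((TensorProduct.rid k H).toLinearMap ∘ₗ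
      (LinearMap.lTensor H ((LinearMap.mul' k k) ∘ₗ TensorProduct.map f γ.toLinearMap))) hco
    simp only [map_sum, LinearMap.coe_comp, Function.comp_apply, LinearEquiv.coe_coe,
      LinearMap.lTensor_tmul, TensorProduct.map_tmul, LinearMap.mul'_apply, rid_tmul,
      AlgHom.toLinearMap_apply] at hT
    calc ∑ i ∈ r.index,
        γ (r.right i) • lap f ((TensorProduct.comm k H H) (Coalgebra.comul (R := k) (r.left i)))
        = ∑ i ∈ r.index, ∑ j ∈ (rl i).index,
            (f ((rl i).right j) * γ (r.right i)) • (rl i).left j := by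
          refine Finset.sum_congr rfl fun i _ => ?_
          rw [hexp i, Finset.smul_sum]
          exact Finset.sum_congr rfl fun j _ => by rw [smul_smul, mul_comm]
      _ = ∑ i ∈ r.index, ∑ j ∈ (rr i).index,
            (f ((rr i).left j) * γ ((rr i).right j)) • r.left i := hT
      _ = ∑ i ∈ r.index, counit (R := k) (r.right i) • r.left i := by
          refine Finset.sum_congr rfl fun i _ => ?_
          rw [← Finset.sum_smul]
          congr 1
          simpa only [hfapp] using fγ_sum γ (rr i)
      _ = h := sum_counit_smul_left r
  -- put everything together
  rw [hsw]
  calc ∑ i ∈ r.index, γ (r.right i) • lap f (Coalgebra.comul (R := k) (r.left i))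
      = ∑ i ∈ r.index, γ (r.right i) •
          (lap f U * lap f ((TensorProduct.comm k H H) (Coalgebra.comul (R := k) (r.left i)))
            * lap f R) := by
        exact Finset.sum_congr rfl fun i _ => by rw [key]
    _ = lap f U * (∑ i ∈ r.index,
          γ (r.right i) • lap f ((TensorProduct.comm k H H)
            (Coalgebra.comul (R := k) (r.left i)))) * lap f R := by
        rw [Finset.mul_sum, Finset.sum_mul]
        exact Finset.sum_congr rfl fun i _ => by
          rw [mul_smul_comm, smul_mul_assoc]
    _ = lap f U * h * lap f R := by rw [hmid]
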